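/- Let λ, μ ∈ (0,1) and define f_{λ,μ}(θ) := λ^{−1/2 + 1/(1 − √μ e^{iθ})} for θ ∈ ℝ, where λ^z := exp(z ln λ). Set M := λ^{(1−√μ)/(1+√μ)}. Then ‖f_{λ,μ}‖_2 ≤ √(2π M), and the second derivative of f_{λ,μ} satisfies ‖f_{λ,μ}''‖_2 ≤ √M · √(2πμ) · ln(1/λ) · (1 + √μ ln(1/λ) + μ) / (1 − √μ)^4. -/

import Mathlib

open MeasureTheory

noncomputable def singularValues {n : ℕ} (A : Matrix (Fin n) (Fin n) ℂ) : Fin n → ℝ :=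
  fun i => Real.sqrt ((Matrix.isHermitian_conjTranspose_mul_self A).eigenvalues i)


/-- The symbol `f_{λ,μ}(θ) = λ^{-1/2 + 1/(1 - √μ e^{iθ})}`. -/
noncomputable def fSymb (lam mu : ℝ) : ℝ → ℂ :=
  fun θ => Complex.exp ((-1/2 + 1 / (1 - (Real.sqrt mu : ℂ) * Complex.exp (Complex.I * (θ : ℂ))))
    * (Real.log lam : ℂ))

/-- The L² norm over one period. -/
noncomputable def l2Norm (g : ℝ → ℂ) : ℝ :=
  Real.sqrt (∫ x in (0:ℝ)..(2 * Real.pi), ‖g x‖ ^ 2)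


namespace FAux

noncomputable def uu (s : ℝ) (z : ℂ) : ℂ := (s:ℂ) * Complex.exp (Complex.I * z)
noncomputable def ww (s : ℝ) (z : ℂ) : ℂ := 1 - uu s z
noncomputable def GG (s : ℝ) (c : ℂ) (z : ℂ) : ℂ := Complex.exp ((-1/2 + 1/(ww s z)) * c)
noncomputable def qq (s : ℝ) (c : ℂ) (z : ℂ) : ℂ := Complex.I * uu s z / (ww s z)^2 * c
noncomputable def pp (s : ℝ) (c : ℂ) (z : ℂ) : ℂ :=
  (-(uu s z)/(ww s z)^2 - 2*(uu s z)^2/(ww s z)^3) * c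

lemma hasDerivAt_uu (s : ℝ) (z : ℂ) : HasDerivAt (uu s) (Complex.I * uu s z) z := by
  have h1 : HasDerivAt (fun z : ℂ => Complex.I * z) Complex.I z := by
    simpa using (hasDerivAt_id z).const_mul Complex.I
  have h2 := h1.cexp
  have h3 := h2.const_mul (s:ℂ)
  refine h3.congr_deriv (Eq.symm ?_)
  simp [uu]; ring

lemma hasDerivAt_ww (s : ℝ) (z : ℂ) : HasDerivAt (ww s) (-(Complex.I * uu s z)) z :=
  (hasDerivAt_uu s z).const_sub 1

lemma hasDerivAt_GG (s : ℝ) (c : ℂ) (z : ℂ) (hw : ww s z ≠ 0) :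
    HasDerivAt (GG s c) (GG s c z * qq s c z) z := by
  have h5 := ((hasDerivAt_ww s z).inv hw).const_add (-1/2 : ℂ)
  have h7 := (h5.mul_const c).cexp
  have hfun : (fun z => Complex.exp ((-1/2 + (ww s z)⁻¹) * c)) = GG s c := by
    funext y; simp [GG, one_div]
  rw [show (fun x => Complex.exp ((-1/2 + (ww s)⁻¹ x) * c)) = GG s c from hfun] at h7
  refine h7.congr_deriv (Eq.symm ?_)
  simp only [GG, qq, Pi.inv_apply]
  field_simp

lemma hasDerivAt_qq (s : ℝ) (c : ℂ) (z : ℂ) (hw : ww s z ≠ 0) :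
    HasDerivAt (qq s c) (pp s c z) z := by
  have hnum : HasDerivAt (fun z => Complex.I * uu s z * c) (Complex.I * (Complex.I * uu s z) * c) z :=
    ((hasDerivAt_uu s z).const_mul Complex.I).mul_const c
  have hden : HasDerivAt (fun z => (ww s z)^2) (2 * (ww s z)^1 * (-(Complex.I * uu s z))) z :=
    (hasDerivAt_ww s z).pow 2
  have hd := hnum.div hden (pow_ne_zero 2 hw)
  have hfun : (fun z => Complex.I * uu s z * c / (ww s z)^2) = qq s c := by
    funext y; simp only [qq]; ring
  rw [show ((fun z => Complex.I * uu s z * c) / fun z => ww s z ^ 2) = qq s c from hfun] at hd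
  refine hd.congr_deriv (Eq.symm ?_)
  simp only [pp]
  field_simp
  linear_combination (-(uu s z * ww s z * c) - 2*uu s z^2*c) * Complex.I_sq


lemma abs_uu (s : ℝ) (hs0 : 0 ≤ s) (θ : ℝ) : ‖uu s θ‖ = s := by
  simp [uu, Complex.norm_exp, _root_.abs_of_nonneg hs0]

lemma le_abs_ww (s : ℝ) (hs0 : 0 ≤ s) (θ : ℝ) : 1 - s ≤ ‖ww s θ‖ := by
  have h := norm_add_le (ww s (θ:ℂ)) (uu s (θ:ℂ))
  have h2 : ww s (θ:ℂ) + uu s (θ:ℂ) = 1 := by simp [ww]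
  rw [h2, abs_uu s hs0 θ] at h
  simp at h
  linarith

lemma ww_ne (s : ℝ) (hs0 : 0 ≤ s) (hs1 : s < 1) (θ : ℝ) : ww s (θ:ℂ) ≠ 0 := by
  intro h
  have := le_abs_ww s hs0 θ
  rw [h] at this
  simp at this
  linarith

lemma re_bound (s : ℝ) (hs0 : 0 ≤ s) (hs1 : s < 1) (θ : ℝ) :
    (1 - s)/(2*(1+s)) ≤ (-1/2 + 1/(ww s (θ:ℂ))).re := by
  set u := uu s (θ:ℂ) with hu_def
  have habs : ‖u‖ = s := abs_uu s hs0 θ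
  have hu : u.re^2 + u.im^2 = s^2 := by
    have : Complex.normSq u = s^2 := by rw [← Complex.sq_norm, habs]
    simpa [Complex.normSq_apply, sq] using this
  have ht : -s ≤ u.re := by
    have h := Complex.abs_re_le_norm u
    rw [habs] at h
    exact (abs_le.mp h).1
  have hDpos : 0 < Complex.normSq (ww s (θ:ℂ)) :=
    Complex.normSq_pos.mpr (ww_ne s hs0 hs1 θ)
  have hD : Complex.normSq (ww s (θ:ℂ)) = 1 - 2*u.re + s^2 := by
    simp only [ww, Complex.normSq_apply, Complex.sub_re, Complex.sub_im, Complex.one_re,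
      Complex.one_im, ← hu_def]
    nlinarith [hu]
  have hre : (-1/2 + 1/(ww s (θ:ℂ))).re
      = -1/2 + (1 - u.re)/Complex.normSq (ww s (θ:ℂ)) := by
    simp [one_div, Complex.add_re, Complex.inv_re, ww, Complex.sub_re, ← hu_def]
  rw [hre]
  have h1 : 1/(1+s) ≤ (1 - u.re)/Complex.normSq (ww s (θ:ℂ)) := by
    rw [div_le_div_iff₀ (by linarith) hDpos, hD]
    nlinarith
  have key : (1-s)/(2*(1+s)) = -1/2 + 1/(1+s) := by
    field_simp
    ring
  rw [key]
  linarith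

lemma abs_GG_le (s : ℝ) (lam : ℝ) (hlam : lam ∈ Set.Ioo (0:ℝ) 1)
    (hs0 : 0 ≤ s) (hs1 : s < 1) (θ : ℝ) :
    ‖GG s ((Real.log lam : ℝ) : ℂ) (θ:ℂ)‖ ≤ lam ^ ((1-s)/(2*(1+s))) := by
  have hl : Real.log lam < 0 := Real.log_neg hlam.1 hlam.2
  rw [GG, Complex.norm_exp]
  have hre : (((-1/2 + 1/(ww s (θ:ℂ))) * ((Real.log lam : ℝ) : ℂ))).re
      = (-1/2 + 1/(ww s (θ:ℂ))).re * Real.log lam := by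
    simp [Complex.mul_re]
  rw [hre, Real.rpow_def_of_pos hlam.1]
  apply Real.exp_le_exp.mpr
  rw [mul_comm (Real.log lam)]
  exact mul_le_mul_of_nonpos_right (re_bound s hs0 hs1 θ) hl.le


lemma abs_qq_le (s : ℝ) (c : ℂ) (hs0 : 0 ≤ s) (hs1 : s < 1) (θ : ℝ) :
    ‖qq s c (θ:ℂ)‖ ≤ s * ‖c‖ / (1-s)^2 := by
  have hw := le_abs_ww s hs0 θ
  have hwpos : (0:ℝ) < 1 - s := by linarith
  rw [qq, norm_mul, norm_div, norm_mul, abs_uu s hs0 θ, Complex.norm_I, one_mul]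
  rw [norm_pow]
  have h1 : (1-s)^2 ≤ ‖ww s (θ:ℂ)‖^2 := by
    apply pow_le_pow_left₀ hwpos.le hw
  calc s / ‖ww s (θ:ℂ)‖^2 * ‖c‖
      ≤ s / (1-s)^2 * ‖c‖ := by
        gcongr
    _ = s * ‖c‖ / (1-s)^2 := by ring

lemma abs_pp_le (s : ℝ) (c : ℂ) (hs0 : 0 ≤ s) (hs1 : s < 1) (θ : ℝ) :
    ‖pp s c (θ:ℂ)‖ ≤ (s/(1-s)^2 + 2*s^2/(1-s)^3) * ‖c‖ := by
  have hw := le_abs_ww s hs0 θ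
  have hwpos : (0:ℝ) < 1 - s := by linarith
  rw [pp, norm_mul]
  have h2 : (1-s)^2 ≤ ‖ww s (θ:ℂ)‖^2 := pow_le_pow_left₀ hwpos.le hw 2
  have h3 : (1-s)^3 ≤ ‖ww s (θ:ℂ)‖^3 := pow_le_pow_left₀ hwpos.le hw 3
  have hsub : ‖-(uu s (θ:ℂ))/(ww s (θ:ℂ))^2 - 2*(uu s (θ:ℂ))^2/(ww s (θ:ℂ))^3‖
      ≤ s/(1-s)^2 + 2*s^2/(1-s)^3 := by
    calc ‖-(uu s (θ:ℂ))/(ww s (θ:ℂ))^2 - 2*(uu s (θ:ℂ))^2/(ww s (θ:ℂ))^3‖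
        ≤ s / ‖ww s (θ:ℂ)‖^2 + 2*s^2 / ‖ww s (θ:ℂ)‖^3 := by
            have h := norm_add_le (-(uu s (θ:ℂ))/(ww s (θ:ℂ))^2)
              (-(2*(uu s (θ:ℂ))^2/(ww s (θ:ℂ))^3))
            simpa [sub_eq_add_neg, norm_neg, norm_div, norm_mul, norm_pow,
              abs_uu s hs0 θ, Complex.norm_two] using h
      _ ≤ s/(1-s)^2 + 2*s^2/(1-s)^3 := by gcongr
  calc ‖-(uu s (θ:ℂ))/(ww s (θ:ℂ))^2 - 2*(uu s (θ:ℂ))^2/(ww s (θ:ℂ))^3‖ * ‖c‖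
      ≤ (s/(1-s)^2 + 2*s^2/(1-s)^3) * ‖c‖ := by
        apply mul_le_mul_of_nonneg_right hsub (norm_nonneg c)

end FAux

lemma l2Norm_le_of_bound (g : ℝ → ℂ) (B : ℝ) (hB : 0 ≤ B) (hg : Continuous g)
    (h : ∀ θ, ‖g θ‖ ≤ B) :
    l2Norm g ≤ Real.sqrt (2*Real.pi) * B := by
  rw [l2Norm]
  have hint : (∫ x in (0:ℝ)..(2*Real.pi), ‖g x‖^2)
      ≤ ∫ _x in (0:ℝ)..(2*Real.pi), B^2 := by
    apply intervalIntegral.integral_mono_on (by positivity)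
    · exact ((continuous_norm.comp hg).pow 2).intervalIntegrable _ _
    · exact intervalIntegrable_const
    · intro x _
      exact pow_le_pow_left₀ (norm_nonneg _) (h x) 2
  have h2 : (∫ _x in (0:ℝ)..(2*Real.pi), (B^2:ℝ)) = 2*Real.pi * B^2 := by
    simp [intervalIntegral.integral_const]
  calc Real.sqrt (∫ x in (0:ℝ)..(2*Real.pi), ‖g x‖^2)
      ≤ Real.sqrt (2*Real.pi*B^2) := Real.sqrt_le_sqrt (by rw [← h2]; exact hint)
    _ = Real.sqrt (2*Real.pi) * B := by
        rw [Real.sqrt_mul (by positivity), Real.sqrt_sq hB]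


/-- Bounds on the L² norms of the symbol `f_{λ,μ}` and of its second derivative. -/
theorem fSymb_l2_bounds
    (lam mu : ℝ) (hlam : lam ∈ Set.Ioo (0:ℝ) 1) (hmu : mu ∈ Set.Ioo (0:ℝ) 1) :
    l2Norm (fSymb lam mu)
        ≤ Real.sqrt (2 * Real.pi * lam ^ ((1 - Real.sqrt mu) / (1 + Real.sqrt mu)))
      ∧ l2Norm (iteratedDeriv 2 (fSymb lam mu))
        ≤ Real.sqrt (lam ^ ((1 - Real.sqrt mu) / (1 + Real.sqrt mu)))
            * Real.sqrt (2 * Real.pi * mu) * Real.log (1 / lam)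
            * (1 + Real.sqrt mu * Real.log (1 / lam) + mu) / (1 - Real.sqrt mu) ^ 4 := by
  obtain ⟨hlam0, hlam1⟩ := hlam
  obtain ⟨hmu0, hmu1⟩ := hmu
  set s := Real.sqrt mu with hs_def
  have hs0 : 0 < s := Real.sqrt_pos.mpr hmu0
  have hmus : mu = s^2 := (Real.sq_sqrt hmu0.le).symm
  have hs1 : s < 1 := by nlinarith
  have hd : (0:ℝ) < 1 - s := by linarith
  set c : ℂ := ((Real.log lam : ℝ) : ℂ) with hc_def
  set L : ℝ := -Real.log lam with hL_def
  have hlog : Real.log lam < 0 := Real.log_neg hlam0 hlam1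
  have hLpos : 0 < L := by rw [hL_def]; linarith
  have habsc : ‖c‖ = L := by
    rw [hc_def, Complex.norm_real, Real.norm_eq_abs, abs_of_neg hlog, hL_def]
  have hL1 : Real.log (1/lam) = L := by rw [one_div, Real.log_inv, hL_def]
  have hne : ∀ θ : ℝ, FAux.ww s (θ:ℂ) ≠ 0 := FAux.ww_ne s hs0.le hs1
  set A : ℝ := lam ^ ((1-s)/(2*(1+s))) with hA_def
  have hA0 : 0 ≤ A := Real.rpow_nonneg hlam0.le _
  have hAsqrt : Real.sqrt (lam ^ ((1 - s) / (1 + s))) = A := by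
    rw [Real.sqrt_eq_rpow, ← Real.rpow_mul hlam0.le, hA_def,
      show (1-s)/(1+s)*(1/2) = (1-s)/(2*(1+s)) by rw [div_mul_div_comm, mul_one, mul_comm]]
  have hfeq : fSymb lam mu = fun θ:ℝ => FAux.GG s c (θ:ℂ) := rfl
  have hce : Continuous fun θ:ℝ => Complex.exp (Complex.I * (θ:ℂ)) :=
    Complex.continuous_exp.comp (continuous_const.mul Complex.continuous_ofReal)
  have hcu : Continuous fun θ:ℝ => FAux.uu s (θ:ℂ) := continuous_const.mul hce
  have hcw : Continuous fun θ:ℝ => FAux.ww s (θ:ℂ) := continuous_const.sub hcu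
  have hcG : Continuous fun θ:ℝ => FAux.GG s c (θ:ℂ) := by
    apply Complex.continuous_exp.comp
    exact (continuous_const.add (continuous_const.div hcw hne)).mul continuous_const
  have habsG : ∀ θ:ℝ, ‖FAux.GG s c (θ:ℂ)‖ ≤ A :=
    fun θ => FAux.abs_GG_le s lam ⟨hlam0, hlam1⟩ hs0.le hs1 θ
  constructor
  · have h := l2Norm_le_of_bound (fSymb lam mu) A hA0 (by rw [hfeq]; exact hcG)
      (by rw [hfeq]; exact fun θ => habsG θ)
    calc l2Norm (fSymb lam mu) ≤ Real.sqrt (2*Real.pi) * A := h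
      _ = Real.sqrt (2*Real.pi*lam^((1-s)/(1+s))) := by
          rw [show Real.sqrt (2*Real.pi*lam^((1-s)/(1+s))) = Real.sqrt (2*Real.pi) * A by
            rw [Real.sqrt_mul (by positivity), hAsqrt]]
  · set q : ℝ → ℂ := fun θ => FAux.qq s c (θ:ℂ) with hq_def
    set p : ℝ → ℂ := fun θ => FAux.pp s c (θ:ℂ) with hp_def
    have hdG : ∀ θ:ℝ, HasDerivAt (fSymb lam mu) (FAux.GG s c (θ:ℂ) * q θ) θ := fun θ =>
      (FAux.hasDerivAt_GG s c (θ:ℂ) (hne θ)).comp_ofReal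
    have hdq : ∀ θ:ℝ, HasDerivAt q (p θ) θ := fun θ =>
      (FAux.hasDerivAt_qq s c (θ:ℂ) (hne θ)).comp_ofReal
    have h1 : deriv (fSymb lam mu) = fun θ : ℝ => FAux.GG s c (θ:ℂ) * q θ :=
      funext fun θ => (hdG θ).deriv
    have h2 : iteratedDeriv 2 (fSymb lam mu)
        = fun θ : ℝ => FAux.GG s c (θ:ℂ) * q θ * q θ + FAux.GG s c (θ:ℂ) * p θ := by
      rw [iteratedDeriv_succ, iteratedDeriv_one, h1]
      funext θ
      exact ((hdG θ).mul (hdq θ)).deriv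
    have hcq : Continuous q := by
      rw [hq_def]; unfold FAux.qq
      exact ((continuous_const.mul hcu).div (hcw.pow 2)
        (fun θ => pow_ne_zero 2 (hne θ))).mul continuous_const
    have hcp : Continuous p := by
      rw [hp_def]; unfold FAux.pp
      exact ((hcu.neg.div (hcw.pow 2) fun θ => pow_ne_zero 2 (hne θ)).sub
        ((continuous_const.mul (hcu.pow 2)).div (hcw.pow 3)
          fun θ => pow_ne_zero 3 (hne θ))).mul continuous_const
    set Q : ℝ := s * L / (1-s)^2 with hQ_def
    set P : ℝ := (s/(1-s)^2 + 2*s^2/(1-s)^3) * L with hP_def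
    have hQ0 : 0 ≤ Q := by rw [hQ_def]; positivity
    have hP0 : 0 ≤ P := by rw [hP_def]; positivity
    have habs2 : ∀ θ:ℝ, ‖FAux.GG s c (θ:ℂ) * q θ * q θ + FAux.GG s c (θ:ℂ) * p θ‖
        ≤ A * (Q*Q + P) := by
      intro θ
      have g1 := habsG θ
      have q1 : ‖q θ‖ ≤ Q := by
        rw [hQ_def, ← habsc]; exact FAux.abs_qq_le s c hs0.le hs1 θ
      have p1 : ‖p θ‖ ≤ P := by
        rw [hP_def, ← habsc]; exact FAux.abs_pp_le s c hs0.le hs1 θ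
      calc ‖FAux.GG s c (θ:ℂ) * q θ * q θ + FAux.GG s c (θ:ℂ) * p θ‖
          ≤ ‖FAux.GG s c (θ:ℂ) * q θ * q θ‖
            + ‖FAux.GG s c (θ:ℂ) * p θ‖ := norm_add_le _ _
        _ = ‖FAux.GG s c (θ:ℂ)‖ * ‖q θ‖ * ‖q θ‖
            + ‖FAux.GG s c (θ:ℂ)‖ * ‖p θ‖ := by
            rw [norm_mul, norm_mul, norm_mul]
        _ ≤ A * Q * Q + A * P := by
            have t1 : ‖FAux.GG s c (θ:ℂ)‖ * ‖q θ‖ * ‖q θ‖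
                ≤ A * Q * Q :=
              mul_le_mul (mul_le_mul g1 q1 (norm_nonneg _) hA0) q1
                (norm_nonneg _) (by positivity)
            have t2 : ‖FAux.GG s c (θ:ℂ)‖ * ‖p θ‖ ≤ A * P :=
              mul_le_mul g1 p1 (norm_nonneg _) hA0
            linarith
        _ = A * (Q*Q + P) := by ring
    have hb := l2Norm_le_of_bound (iteratedDeriv 2 (fSymb lam mu)) (A * (Q*Q + P))
      (by positivity)
      (by rw [h2]; exact ((hcG.mul hcq).mul hcq).add (hcG.mul hcp))
      (by rw [h2]; exact habs2)
    have hfrac : Q*Q + P ≤ s*L*(1+s*L+s^2)/(1-s)^4 := by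
      rw [show Q*Q+P = (s^2*L^2 + s*L*(1-s)^2 + 2*s^2*L*(1-s))/(1-s)^4 by
        rw [hQ_def, hP_def]; field_simp; ring]
      rw [div_le_div_iff₀ (by positivity) (by positivity)]
      nlinarith [mul_nonneg (mul_nonneg (mul_nonneg (by norm_num : (0:ℝ) ≤ 2)
        (pow_nonneg hs0.le 3)) hLpos.le) (pow_nonneg hd.le 4)]
    have hsqmu : Real.sqrt (2*Real.pi*mu) = Real.sqrt (2*Real.pi) * s := by
      rw [Real.sqrt_mul (by positivity), hs_def]
    calc l2Norm (iteratedDeriv 2 (fSymb lam mu))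
        ≤ Real.sqrt (2*Real.pi) * (A * (Q*Q + P)) := hb
      _ ≤ Real.sqrt (2*Real.pi) * (A * (s*L*(1+s*L+s^2)/(1-s)^4)) := by
          exact mul_le_mul_of_nonneg_left (mul_le_mul_of_nonneg_left hfrac hA0)
            (Real.sqrt_nonneg _)
      _ = Real.sqrt (lam ^ ((1 - s) / (1 + s))) * Real.sqrt (2 * Real.pi * mu)
            * Real.log (1 / lam) * (1 + s * Real.log (1 / lam) + mu) / (1 - s) ^ 4 := by
          rw [hL1, hsqmu, hAsqrt, hmus]
          ring
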